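/- For any summable weighted graph (G,m) whose vertex set has at least two elements, the dual Cheeger constant and the invariant κ satisfy h̄(G,m) + κ(G,m) ≥ 1. -/
import Mathlib


open MeasureTheory

/-- A summable weighted graph on a vertex set `V`. -/
structure SummableWeightedGraph (V : Type*) where
  m : V → V → ℝ
  symm : ∀ u v, m u v = m v u
  nonneg : ∀ u v, 0 ≤ m u v
  loopless : ∀ v, m v v = 0
  summable : Summable fun p : V × V => m p.1 p.2
  noIsolated : ∀ v, 0 < ∑' u, m v u

namespace SummableWeightedGraph

variable {V : Type*} (G : SummableWeightedGraph V)

/-- The weight of a vertex. -/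
noncomputable def deg (v : V) : ℝ := ∑' u, G.m v u

/-- The weight of a set of vertices. -/
noncomputable def setWeight (S : Set V) : ℝ := ∑' v : S, G.deg v

/-- The weight of the boundary of a set of vertices. -/
noncomputable def boundaryWeight (S : Set V) : ℝ :=
  ∑' p : ↥S × ↥Sᶜ, G.m p.1 p.2

/-- The Cheeger constant. -/
noncomputable def cheegerConst : ℝ :=
  sInf { r : ℝ | ∃ S : Set V, S.Nonempty ∧ G.setWeight S ≤ G.setWeight Sᶜ ∧
    r = G.boundaryWeight S / G.setWeight S }

/-- The weighted counting measure on vertices. -/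
noncomputable def measure [MeasurableSpace V] : Measure V :=
  Measure.sum fun v => ENNReal.ofReal (G.deg v) • Measure.dirac v

/-- The normalised Laplacian, characterised by its pointwise formula. -/
def IsLaplacian [MeasurableSpace V]
    (L : Lp ℝ 2 G.measure →L[ℝ] Lp ℝ 2 G.measure) : Prop :=
  ∀ f : Lp ℝ 2 G.measure, ∀ᵐ v ∂G.measure,
    L f v = f v - (G.deg v)⁻¹ * ∑' u, G.m v u * f u

end SummableWeightedGraph

namespace SummableWeightedGraph

variable {V : Type*} (G : SummableWeightedGraph V)

/-- Total weight `m(A,B)` of the edges joining `A` to `B`. -/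
noncomputable def pairWeight (A B : Set V) : ℝ := ∑' q : ↥A × ↥B, G.m q.1 q.2

/-- The dual Cheeger ratio of a pair of disjoint nonempty sets of vertices. -/
noncomputable def dualCheegerRatio (A B : Set V) : ℝ :=
  2 * G.pairWeight A B / (G.setWeight A + G.setWeight B)

/-- The dual Cheeger constant. -/
noncomputable def dualCheegerConst : ℝ :=
  sSup { r : ℝ | ∃ A B : Set V, A.Nonempty ∧ B.Nonempty ∧ Disjoint A B ∧
    r = G.dualCheegerRatio A B }

end SummableWeightedGraph

namespace SummableWeightedGraph

variable {V : Type*} (G : SummableWeightedGraph V)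

/-- `p_S(v)`, the probability that the random walk moves from `v` into `S` in one step. -/
noncomputable def pProb (S : Set V) (v : V) : ℝ := (∑' u : S, G.m v u) / G.deg v

/-- `κ(A,B)` for a partition `V = A ⊔ B` into nonempty sets. -/
noncomputable def kappaPair (A B : Set V) : ℝ :=
  max (⨆ v : A, G.pProb A v) (⨆ w : B, G.pProb B w)

/-- The invariant `κ(G,m)`. -/
noncomputable def kappa : ℝ :=
  sInf { r : ℝ | ∃ A B : Set V, A.Nonempty ∧ B.Nonempty ∧ Disjoint A B ∧
    A ∪ B = Set.univ ∧ r = G.kappaPair A B }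

end SummableWeightedGraph

namespace SummableWeightedGraph

variable {V : Type*} (G : SummableWeightedGraph V)

lemma aux_summable_row (v : V) : Summable (fun u => G.m v u) :=
  G.summable.comp_injective (i := fun u => ((v, u) : V × V))
    (fun a b h => ((Prod.mk.injEq _ _ _ _).mp h).2)

lemma aux_deg_pos (v : V) : 0 < G.deg v := G.noIsolated v

lemma aux_summable_deg : Summable G.deg :=
  ((summable_prod_of_nonneg (fun _ => G.nonneg _ _)).mp G.summable).2

lemma aux_tsum_subtype_le (v : V) (S : Set V) : (∑' u : S, G.m v u) ≤ G.deg v :=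
  Summable.tsum_le_tsum_of_inj (Subtype.val : S → V) Subtype.val_injective
    (fun u _ => G.nonneg v u) (fun _ => le_rfl)
    ((G.aux_summable_row v).subtype S) (G.aux_summable_row v)

lemma aux_pProb_le_one (S : Set V) (v : V) : G.pProb S v ≤ 1 := by
  rw [pProb, div_le_one (G.aux_deg_pos v)]
  exact G.aux_tsum_subtype_le v S

lemma aux_summable_pair (A B : Set V) :
    Summable (fun q : ↥A × ↥B => G.m q.1 q.2) := by
  apply G.summable.comp_injective (i := fun q : ↥A × ↥B => ((q.1 : V), (q.2 : V)))
  intro q r h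
  obtain ⟨h1, h2⟩ := Prod.ext_iff.mp h
  exact Prod.ext (Subtype.ext h1) (Subtype.ext h2)

lemma aux_pairWeight_eq (A B : Set V) :
    G.pairWeight A B = ∑' v : A, ∑' u : B, G.m v u :=
  Summable.tsum_prod (G.aux_summable_pair A B)

lemma aux_pairWeight_comm (A B : Set V) : G.pairWeight A B = G.pairWeight B A := by
  have h := Equiv.tsum_eq (Equiv.prodComm ↥A ↥B) (fun q : ↥B × ↥A => G.m q.1 q.2)
  rw [pairWeight, pairWeight, ← h]
  exact tsum_congr fun q => G.symm _ _

lemma aux_summable_inner (A B : Set V) :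
    Summable (fun v : A => ∑' u : B, G.m v u) :=
  Summable.of_nonneg_of_le (fun v => tsum_nonneg fun u => G.nonneg _ _)
    (fun v => G.aux_tsum_subtype_le v B) (G.aux_summable_deg.subtype A)

lemma aux_pairWeight_le_left (A B : Set V) : G.pairWeight A B ≤ G.setWeight A := by
  rw [G.aux_pairWeight_eq]
  exact Summable.tsum_le_tsum (fun v => G.aux_tsum_subtype_le v B)
    (G.aux_summable_inner A B) (G.aux_summable_deg.subtype A)

lemma aux_setWeight_pos {A : Set V} (hA : A.Nonempty) : 0 < G.setWeight A := by
  obtain ⟨a, ha⟩ := hA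
  exact Summable.tsum_pos (G.aux_summable_deg.subtype A) (fun v => (G.aux_deg_pos v).le)
    ⟨a, ha⟩ (G.aux_deg_pos a)

lemma aux_ratio_le_one {A B : Set V} (hA : A.Nonempty) (hB : B.Nonempty) :
    G.dualCheegerRatio A B ≤ 1 := by
  rw [dualCheegerRatio,
    div_le_one (add_pos (G.aux_setWeight_pos hA) (G.aux_setWeight_pos hB))]
  have h1 := G.aux_pairWeight_le_left A B
  have h2 : G.pairWeight A B ≤ G.setWeight B := by
    rw [G.aux_pairWeight_comm]; exact G.aux_pairWeight_le_left B A
  linarith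

lemma aux_side_bound (C : Set V) (κ : ℝ) (hκ : ∀ v : C, G.pProb C v ≤ κ) :
    (1 - κ) * G.setWeight C ≤ G.pairWeight C Cᶜ := by
  rw [G.aux_pairWeight_eq, setWeight, ← tsum_mul_left]
  refine Summable.tsum_le_tsum ?_ ((G.aux_summable_deg.subtype C).mul_left _)
    (G.aux_summable_inner C Cᶜ)
  intro v
  have hsplit : (∑' u : C, G.m v u) + (∑' u : ↥Cᶜ, G.m v u) = G.deg v :=
    Summable.tsum_add_tsum_compl ((G.aux_summable_row (v : V)).subtype C)
      ((G.aux_summable_row (v : V)).subtype Cᶜ)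
  have hp : (∑' u : C, G.m v u) ≤ κ * G.deg v := by
    have h := hκ v
    rw [pProb, div_le_iff₀ (G.aux_deg_pos v)] at h
    exact h
  have hexp : (1 - κ) * G.deg (v : V) = G.deg (v : V) - κ * G.deg (v : V) := by ring
  linarith

lemma aux_key {A B : Set V} (hA : A.Nonempty) (hB : B.Nonempty) (hd : Disjoint A B)
    (hu : A ∪ B = Set.univ) : 1 - G.kappaPair A B ≤ G.dualCheegerRatio A B := by
  have hcompl : IsCompl A B := isCompl_iff.mpr ⟨hd, codisjoint_iff.mpr (by simpa using hu)⟩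
  have hBA : B = Aᶜ := (hcompl.compl_eq).symm
  have hAB : A = Bᶜ := (hcompl.symm.compl_eq).symm
  set κ := G.kappaPair A B with hκdef
  have hκA : ∀ v : A, G.pProb A v ≤ κ := by
    intro v
    refine le_trans ?_ (le_max_left _ _)
    exact le_ciSup (f := fun v : A => G.pProb A v) ⟨1, by rintro _ ⟨w, rfl⟩; exact G.aux_pProb_le_one A w⟩ v
  have hκB : ∀ v : B, G.pProb B v ≤ κ := by
    intro v
    refine le_trans ?_ (le_max_right _ _)
    exact le_ciSup (f := fun v : B => G.pProb B v) ⟨1, by rintro _ ⟨w, rfl⟩; exact G.aux_pProb_le_one B w⟩ v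
  have h1 : (1 - κ) * G.setWeight A ≤ G.pairWeight A B := by
    have := G.aux_side_bound A κ hκA
    rwa [← hBA] at this
  have h2 : (1 - κ) * G.setWeight B ≤ G.pairWeight A B := by
    have := G.aux_side_bound B κ hκB
    rwa [← hAB, ← G.aux_pairWeight_comm] at this
  have hpos : 0 < G.setWeight A + G.setWeight B :=
    add_pos (G.aux_setWeight_pos hA) (G.aux_setWeight_pos hB)
  rw [dualCheegerRatio, le_div_iff₀ hpos]
  nlinarith [h1, h2]

end SummableWeightedGraph

open SummableWeightedGraph in
/-- `h̄(G,m) + κ(G,m) ≥ 1`. -/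
theorem dualCheeger_add_kappa_ge_one {V : Type*} [Countable V] [Nontrivial V]
    (G : SummableWeightedGraph V) :
    1 ≤ G.dualCheegerConst + G.kappa := by
  have hbddS : BddAbove { r : ℝ | ∃ A B : Set V, A.Nonempty ∧ B.Nonempty ∧ Disjoint A B ∧
      r = G.dualCheegerRatio A B } := by
    refine ⟨1, ?_⟩
    rintro r ⟨A, B, hA, hB, hd, rfl⟩
    exact G.aux_ratio_le_one hA hB
  have hne : { r : ℝ | ∃ A B : Set V, A.Nonempty ∧ B.Nonempty ∧ Disjoint A B ∧
      A ∪ B = Set.univ ∧ r = G.kappaPair A B }.Nonempty := by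
    obtain ⟨a, b, hab⟩ := exists_pair_ne V
    exact ⟨G.kappaPair {a} {a}ᶜ, {a}, {a}ᶜ, ⟨a, rfl⟩, ⟨b, hab.symm⟩,
      disjoint_compl_right, Set.union_compl_self _, rfl⟩
  have hlow : 1 - G.dualCheegerConst ≤ G.kappa := by
    refine le_csInf hne ?_
    rintro r ⟨A, B, hA, hB, hd, hu, rfl⟩
    have h1 : G.dualCheegerRatio A B ≤ G.dualCheegerConst :=
      le_csSup hbddS ⟨A, B, hA, hB, hd, rfl⟩
    have h2 := G.aux_key hA hB hd hu
    linarith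
  linarith
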